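/- Suppose (A,B,C,D) is a minimal realization. Then lim_{τ→∞} γ₋(T^τ) = sup { ζ ≥ 0 : there exists a symmetric positive semidefinite P ∈ ℝ^{n×n} such that the block matrix [[AᵀPA − P − CᵀC, AᵀPB − CᵀD], [BᵀPA − DᵀC, BᵀPB − DᵀD + ζ²I]] is negative semidefinite }. -/

import Mathlib

open scoped ENNReal
open Filter Matrix Topology

noncomputable section

abbrev Evec (m : ℕ) := EuclideanSpace ℂ (Fin m)

/-- Action of a real matrix on a complex Euclidean vector. -/
noncomputable def act {a b : ℕ} (M : Matrix (Fin a) (Fin b) ℝ) (v : Evec b) : Evec a :=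
  Matrix.toEuclideanLin (M.map Complex.ofReal) v

/-- Output of the discrete-time system with zero initial state. -/
noncomputable def output {n m : ℕ} (A : Matrix (Fin n) (Fin n) ℝ) (B : Matrix (Fin n) (Fin m) ℝ)
    (C : Matrix (Fin m) (Fin n) ℝ) (D : Matrix (Fin m) (Fin m) ℝ)
    (u : ℕ → Evec m) (k : ℕ) : Evec m :=
  act D (u k) + ∑ i ∈ Finset.range k, act (C * A ^ (k - 1 - i) * B) (u i)

/-- ℓ₂ norm of a sequence, valued in [0,∞]. -/
noncomputable def enorm2 {m : ℕ} (f : ℕ → Evec m) : ℝ≥0∞ :=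
  (∑' k, (‖f k‖₊ : ℝ≥0∞) ^ 2) ^ (1/2 : ℝ)

noncomputable def norm2 {m : ℕ} (f : ℕ → Evec m) : ℝ := (enorm2 f).toReal

noncomputable def inner2 {m : ℕ} (f g : ℕ → Evec m) : ℂ := ∑' k, (inner ℂ (f k) (g k) : ℂ)

noncomputable def sangle {m : ℕ} (u y : ℕ → Evec m) : ℝ :=
  open scoped Classical in
  if y = 0 then 0 else Real.arccos ((inner2 y u).re / (norm2 y * norm2 u))

noncomputable def srg {m : ℕ} (dom : Set (ℕ → Evec m))
    (T : (ℕ → Evec m) → (ℕ → Evec m)) : Set ℂ :=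
  {w | ∃ u ∈ dom, u ≠ 0 ∧
    (w = ((norm2 (T u) / norm2 u : ℝ) : ℂ) * Complex.exp ((sangle u (T u) : ℂ) * Complex.I) ∨
     w = ((norm2 (T u) / norm2 u : ℝ) : ℂ) * Complex.exp (-(sangle u (T u) : ℂ) * Complex.I))}

noncomputable def maxGain {m : ℕ} (dom : Set (ℕ → Evec m))
    (T : (ℕ → Evec m) → (ℕ → Evec m)) : ℝ≥0∞ :=
  ⨆ u ∈ {v ∈ dom | v ≠ 0}, enorm2 (T u) / enorm2 u

noncomputable def minGain {m : ℕ} (dom : Set (ℕ → Evec m))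
    (T : (ℕ → Evec m) → (ℕ → Evec m)) : ℝ≥0∞ :=
  ⨅ u ∈ {v ∈ dom | v ≠ 0}, enorm2 (T u) / enorm2 u

/-- The subspace ℓ_{2,τ}: sequences vanishing strictly after time τ. -/
def ltwoTau (m τ : ℕ) : Set (ℕ → Evec m) := {u | ∀ k, τ < k → u k = 0}

/-- The truncated operator T^τ. -/
noncomputable def TtauMap {n m : ℕ} (A : Matrix (Fin n) (Fin n) ℝ) (B : Matrix (Fin n) (Fin m) ℝ)
    (C : Matrix (Fin m) (Fin n) ℝ) (D : Matrix (Fin m) (Fin m) ℝ) (τ : ℕ)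
    (u : ℕ → Evec m) (k : ℕ) : Evec m :=
  if k ≤ τ then output A B C D u k else 0

/-- Domain of the ℓ₂ operator T. -/
def domInf {n m : ℕ} (A : Matrix (Fin n) (Fin n) ℝ) (B : Matrix (Fin n) (Fin m) ℝ)
    (C : Matrix (Fin m) (Fin n) ℝ) (D : Matrix (Fin m) (Fin m) ℝ) : Set (ℕ → Evec m) :=
  {u | enorm2 u ≠ ⊤ ∧ enorm2 (output A B C D u) ≠ ⊤}

/-- Limit of a sequence of subsets of a topological space. -/
def setLimit {X : Type*} [TopologicalSpace X] (S : ℕ → Set X) : Set X :=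
  {x | ∃ z : ℕ → X, (∀ τ, z τ ∈ S τ) ∧ Tendsto z atTop (𝓝 x)}

/-- The (possibly unbounded) annulus centred at α with radii lo ≤ hi, as a subset of Ĉ. -/
def annulus (α : ℝ) (lo hi : ℝ≥0∞) : Set (OnePoint ℂ) :=
  {w | (w = OnePoint.infty ∧ hi = ⊤) ∨
    ∃ z : ℂ, w = (((α : ℂ) + z : ℂ) : OnePoint ℂ) ∧ lo ≤ (‖z‖₊ : ℝ≥0∞) ∧ (‖z‖₊ : ℝ≥0∞) ≤ hi}




/-- A real matrix is negative semidefinite: symmetric and xᵀMx ≤ 0 for all x. -/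
def IsNegSemidef {k : Type*} [Fintype k] (M : Matrix k k ℝ) : Prop :=
  M.IsSymm ∧ ∀ x : k → ℝ, x ⬝ᵥ M.mulVec x ≤ 0

/-- A real matrix is positive semidefinite: symmetric and xᵀMx ≥ 0 for all x. -/
def IsPosSemidefR {k : Type*} [Fintype k] (M : Matrix k k ℝ) : Prop :=
  M.IsSymm ∧ ∀ x : k → ℝ, 0 ≤ x ⬝ᵥ M.mulVec x

/-- A real matrix is negative definite. -/
def IsNegDef {k : Type*} [Fintype k] (M : Matrix k k ℝ) : Prop :=
  M.IsSymm ∧ ∀ x : k → ℝ, x ≠ 0 → x ⬝ᵥ M.mulVec x < 0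

/-- (A,B) is controllable: the controllability matrix has full rank n. -/
def Controllable {n m : ℕ} (A : Matrix (Fin n) (Fin n) ℝ) (B : Matrix (Fin n) (Fin m) ℝ) : Prop :=
  (Matrix.of fun i (p : Fin n × Fin m) => (A ^ (p.1 : ℕ) * B) i p.2).rank = n

/-- The observability matrix of depth l (rows C, CA, …, CA^{l-1}). -/
def obsMat {n m : ℕ} (A : Matrix (Fin n) (Fin n) ℝ) (C : Matrix (Fin m) (Fin n) ℝ) (l : ℕ) :
    Matrix (Fin l × Fin m) (Fin n) ℝ :=
  Matrix.of fun p j => (C * A ^ (p.1 : ℕ)) p.2 j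

/-- (A,C) is observable: the depth-n observability matrix has full rank n. -/
def Observable {n m : ℕ} (A : Matrix (Fin n) (Fin n) ℝ) (C : Matrix (Fin m) (Fin n) ℝ) : Prop :=
  (obsMat A C n).rank = n

/-- The lag of the system: smallest l ≥ 1 with full-rank observability matrix of depth l. -/
noncomputable def lag {n m : ℕ} (A : Matrix (Fin n) (Fin n) ℝ) (C : Matrix (Fin m) (Fin n) ℝ) : ℕ :=
  sInf {l | 1 ≤ l ∧ (obsMat A C l).rank = n}

/-- The LMI matrix for the maximum gain. -/
def lmiMax {n m : ℕ} (A : Matrix (Fin n) (Fin n) ℝ) (B : Matrix (Fin n) (Fin m) ℝ)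
    (C : Matrix (Fin m) (Fin n) ℝ) (D : Matrix (Fin m) (Fin m) ℝ)
    (P : Matrix (Fin n) (Fin n) ℝ) (γ : ℝ) : Matrix (Fin n ⊕ Fin m) (Fin n ⊕ Fin m) ℝ :=
  Matrix.fromBlocks (Aᵀ * P * A - P + Cᵀ * C) (Aᵀ * P * B + Cᵀ * D)
    (Bᵀ * P * A + Dᵀ * C) (Bᵀ * P * B + Dᵀ * D - γ ^ 2 • (1 : Matrix (Fin m) (Fin m) ℝ))

/-- The LMI matrix for the minimum gain. -/
def lmiMin {n m : ℕ} (A : Matrix (Fin n) (Fin n) ℝ) (B : Matrix (Fin n) (Fin m) ℝ)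
    (C : Matrix (Fin m) (Fin n) ℝ) (D : Matrix (Fin m) (Fin m) ℝ)
    (P : Matrix (Fin n) (Fin n) ℝ) (ζ : ℝ) : Matrix (Fin n ⊕ Fin m) (Fin n ⊕ Fin m) ℝ :=
  Matrix.fromBlocks (Aᵀ * P * A - P - Cᵀ * C) (Aᵀ * P * B - Cᵀ * D)
    (Bᵀ * P * A - Dᵀ * C) (Bᵀ * P * B - Dᵀ * D + ζ ^ 2 • (1 : Matrix (Fin m) (Fin m) ℝ))

/-- Persistency of excitation of order L of the input data (u_k)_{k=0}^{N-1}. -/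
def PersistentlyExciting (m N L : ℕ) (u : ℕ → Fin m → ℝ) : Prop :=
  (Matrix.of fun (p : Fin L × Fin m) (j : Fin (N - L + 1)) => u ((p.1 : ℕ) + (j : ℕ)) p.2).rank
    = m * L

/-- (u,y) is an input-output trajectory of (A,B,C,D) of length N. -/
def IsTrajectory {n m : ℕ} (A : Matrix (Fin n) (Fin n) ℝ) (B : Matrix (Fin n) (Fin m) ℝ)
    (C : Matrix (Fin m) (Fin n) ℝ) (D : Matrix (Fin m) (Fin m) ℝ) (N : ℕ)
    (u y : ℕ → Fin m → ℝ) : Prop :=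
  ∃ x : ℕ → Fin n → ℝ, ∀ k < N,
    x (k + 1) = A.mulVec (x k) + B.mulVec (u k) ∧ y k = C.mulVec (x k) + D.mulVec (u k)

/-- Index type for the extended state ξ (u-block followed by y-block). -/
abbrev rindex (l m : ℕ) := (Fin l × Fin m) ⊕ (Fin l × Fin m)

/-- The extended state ξ_k = (u_{k-l}, …, u_{k-1}, y_{k-l}, …, y_{k-1}). -/
def xi {m : ℕ} (l : ℕ) (u y : ℕ → Fin m → ℝ) (k : ℕ) : rindex l m → ℝ :=
  Sum.elim (fun p => u (k - l + (p.1 : ℕ)) p.2) (fun p => y (k - l + (p.1 : ℕ)) p.2)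

def XiMat {m : ℕ} (l N : ℕ) (u y : ℕ → Fin m → ℝ) : Matrix (rindex l m) (Fin (N - l)) ℝ :=
  Matrix.of fun r j => xi l u y (l + (j : ℕ)) r

def XiPlus {m : ℕ} (l N : ℕ) (u y : ℕ → Fin m → ℝ) : Matrix (rindex l m) (Fin (N - l)) ℝ :=
  Matrix.of fun r j => xi l u y (l + 1 + (j : ℕ)) r

def UXi (m l N : ℕ) (u : ℕ → Fin m → ℝ) : Matrix (Fin m) (Fin (N - l)) ℝ :=
  Matrix.of fun a j => u (l + (j : ℕ)) a

/-! ### Auxiliary development -/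

namespace Stmt3Aux

variable {n m : ℕ}

/-- squared euclidean norm of a real vector -/
def sqn {k : ℕ} (v : Fin k → ℝ) : ℝ := ∑ a, (v a)^2

lemma sqn_nonneg {k : ℕ} (v : Fin k → ℝ) : 0 ≤ sqn v :=
  Finset.sum_nonneg fun _ _ => sq_nonneg _

lemma sqn_eq_dot {k : ℕ} (v : Fin k → ℝ) : sqn v = v ⬝ᵥ v := by
  simp [sqn, dotProduct, sq]

/-- real state sequence -/
def xsR (A : Matrix (Fin n) (Fin n) ℝ) (B : Matrix (Fin n) (Fin m) ℝ)
    (u : ℕ → Fin m → ℝ) : ℕ → Fin n → ℝ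
  | 0 => 0
  | k+1 => A.mulVec (xsR A B u k) + B.mulVec (u k)

/-- real output sequence -/
def yR (A : Matrix (Fin n) (Fin n) ℝ) (B : Matrix (Fin n) (Fin m) ℝ)
    (C : Matrix (Fin m) (Fin n) ℝ) (D : Matrix (Fin m) (Fin m) ℝ)
    (u : ℕ → Fin m → ℝ) (k : ℕ) : Fin m → ℝ :=
  C.mulVec (xsR A B u k) + D.mulVec (u k)

variable (A : Matrix (Fin n) (Fin n) ℝ) (B : Matrix (Fin n) (Fin m) ℝ)
    (C : Matrix (Fin m) (Fin n) ℝ) (D : Matrix (Fin m) (Fin m) ℝ)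

lemma xsR_eq_sum (u : ℕ → Fin m → ℝ) (k : ℕ) :
    xsR A B u k = ∑ i ∈ Finset.range k, (A ^ (k-1-i) * B).mulVec (u i) := by
  induction k with
  | zero => simp [xsR]
  | succ k ih =>
    have hA : ∀ i, i < k → A ^ (k+1-1-i) * B = A * (A ^ (k-1-i) * B) := by
      intro i hik
      have h2 : k + 1 - 1 - i = (k - 1 - i) + 1 := by omega
      rw [h2, pow_succ', Matrix.mul_assoc]
    show A.mulVec (xsR A B u k) + B.mulVec (u k) = _
    rw [ih, Finset.sum_range_succ]
    have h3 := map_sum A.mulVecLin (fun i => (A ^ (k-1-i) * B).mulVec (u i)) (Finset.range k)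
    simp only [Matrix.mulVecLin_apply] at h3
    rw [h3]
    congr 1
    · refine Finset.sum_congr rfl fun i hi => ?_
      rw [hA i (Finset.mem_range.mp hi), Matrix.mulVec_mulVec]
    · have h0 : k + 1 - 1 - k = 0 := by omega
      rw [h0, pow_zero, Matrix.one_mul]

/-- the complexification of a real vector, as an element of `Evec` -/
def cx {k : ℕ} (v : Fin k → ℝ) : Evec k := (WithLp.equiv 2 _).symm (fun a => (v a : ℂ))

lemma cx_apply {k : ℕ} (v : Fin k → ℝ) (a : Fin k) : cx v a = (v a : ℂ) := rfl

lemma cx_add {k : ℕ} (v w : Fin k → ℝ) : cx (v + w) = cx v + cx w := by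
  ext a
  show ((v a + w a : ℝ) : ℂ) = cx v a + cx w a
  rw [cx_apply, cx_apply]; push_cast; ring

lemma cx_sum {k : ℕ} {ι : Type*} (s : Finset ι) (v : ι → Fin k → ℝ) :
    (∑ i ∈ s, cx (v i)) = cx (∑ i ∈ s, v i) := by
  induction s using Finset.cons_induction with
  | empty =>
    ext a
    show (0 : Evec k) a = ((0:ℝ) : ℂ)
    simp
  | cons i s hi ih =>
    rw [Finset.sum_cons, Finset.sum_cons, ih, ← cx_add]

lemma act_cx {a b : ℕ} (M : Matrix (Fin a) (Fin b) ℝ) (v : Fin b → ℝ) :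
    act M (cx v) = cx (M.mulVec v) := by
  ext i
  show (Matrix.toEuclideanLin (M.map Complex.ofReal) (cx v)) i = _
  rw [Matrix.toEuclideanLin_apply]
  show ((M.map Complex.ofReal) *ᵥ (fun a => (v a : ℂ))) i = ((M *ᵥ v) i : ℂ)
  simp [Matrix.mulVec, dotProduct, Matrix.map_apply]

lemma output_cx (u : ℕ → Fin m → ℝ) (k : ℕ) :
    output A B C D (fun j => cx (u j)) k = cx (yR A B C D u k) := by
  rw [output, yR, xsR_eq_sum]
  rw [act_cx, Finset.sum_congr rfl (fun (i : ℕ) _ => act_cx (C * A ^ (k-1-i) * B) (u i)),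
    cx_sum, ← cx_add]
  congr 1
  have h4 : C.mulVec (∑ i ∈ Finset.range k, (A ^ (k-1-i) * B).mulVec (u i))
      = ∑ i ∈ Finset.range k, (C * A^(k-1-i)*B).mulVec (u i) := by
    have h3 := map_sum C.mulVecLin (fun i => (A ^ (k-1-i) * B).mulVec (u i)) (Finset.range k)
    simp only [Matrix.mulVecLin_apply] at h3
    rw [h3]
    exact Finset.sum_congr rfl fun i _ => by rw [Matrix.mulVec_mulVec, Matrix.mul_assoc]
  rw [h4, add_comm]

lemma norm_sq_eval {k : ℕ} (v : Evec k) :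
    ‖v‖^2 = sqn (fun a => (v a).re) + sqn (fun a => (v a).im) := by
  rw [EuclideanSpace.norm_eq, Real.sq_sqrt (by positivity)]
  rw [sqn, sqn, ← Finset.sum_add_distrib]
  congr 1; ext a
  rw [Complex.sq_norm, Complex.normSq_apply]; ring

lemma norm_cx_sq {k : ℕ} (v : Fin k → ℝ) : ‖cx v‖^2 = sqn v := by
  rw [norm_sq_eval]
  simp [cx_apply, sqn]

end Stmt3Aux
namespace Stmt3Aux

variable {n m : ℕ}

lemma enorm2_eq_ofReal {f : ℕ → Evec m} {K : ℕ} (h : ∀ k, K < k → f k = 0) :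
    enorm2 f = (ENNReal.ofReal (∑ k ∈ Finset.range (K+1), ‖f k‖^2)) ^ (1/2 : ℝ) := by
  rw [enorm2]
  congr 1
  rw [tsum_eq_sum (s := Finset.range (K+1))
    (fun k hk => by rw [h k (by simpa using hk)]; simp)]
  rw [ENNReal.ofReal_sum_of_nonneg (fun k _ => by positivity)]
  exact Finset.sum_congr rfl fun k _ => by
    rw [ENNReal.ofReal_pow (norm_nonneg _), ofReal_norm, enorm_eq_nnnorm]

lemma enorm2_ne_top {f : ℕ → Evec m} {K : ℕ} (h : ∀ k, K < k → f k = 0) : enorm2 f ≠ ⊤ := by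
  rw [enorm2_eq_ofReal h]
  exact ENNReal.rpow_ne_top_of_nonneg (by norm_num) ENNReal.ofReal_ne_top

lemma enorm2_ne_zero {f : ℕ → Evec m} (hf : f ≠ 0) : enorm2 f ≠ 0 := by
  rw [enorm2]
  intro hc
  rw [ENNReal.rpow_eq_zero_iff] at hc
  apply hf
  rcases hc with ⟨h0, -⟩ | ⟨-, hlt⟩
  · rw [ENNReal.tsum_eq_zero] at h0
    funext k
    have := h0 k
    simpa using this
  · exact absurd hlt (by norm_num)

/-- The key translation: a statement `ofReal ζ ≤ N^(1/2)/U^(1/2)` into real sums. -/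
lemma ratio_iff {N U : ℝ≥0∞} (hU0 : U ≠ 0) (hUt : U ≠ ⊤) (hNt : N ≠ ⊤) {ζ : ℝ} (hζ : 0 ≤ ζ) :
    ENNReal.ofReal ζ ≤ N ^ (1/2:ℝ) / U ^ (1/2:ℝ) ↔ ζ^2 * U.toReal ≤ N.toReal := by
  rw [ENNReal.le_div_iff_mul_le
      (Or.inl (by simp [ENNReal.rpow_eq_zero_iff, hU0, hUt]))
      (Or.inl (ENNReal.rpow_ne_top_of_nonneg (by norm_num) hUt))]
  rw [← ENNReal.rpow_le_rpow_iff (z := 2) (by norm_num)]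
  rw [ENNReal.mul_rpow_of_nonneg _ _ (by norm_num),
      ← ENNReal.rpow_mul U, ← ENNReal.rpow_mul N,
      ENNReal.ofReal_rpow_of_nonneg hζ (by norm_num : (0:ℝ) ≤ 2),
      show (ζ ^ (2:ℝ)) = ζ^2 from by rw [← Real.rpow_natCast ζ 2]; norm_num]
  norm_num
  constructor
  · intro h
    calc ζ^2 * U.toReal = (ENNReal.ofReal (ζ^2) * U).toReal := by
          rw [ENNReal.toReal_mul, ENNReal.toReal_ofReal (by positivity)]
      _ ≤ N.toReal := ENNReal.toReal_mono hNt h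
  · intro h
    calc ENNReal.ofReal (ζ^2) * U = ENNReal.ofReal (ζ^2 * U.toReal) := by
          rw [ENNReal.ofReal_mul (by positivity), ENNReal.ofReal_toReal hUt]
      _ ≤ N := by
          rw [← ENNReal.ofReal_toReal hNt]
          exact ENNReal.ofReal_le_ofReal h

end Stmt3Aux
namespace Stmt3Aux

variable {n m : ℕ}
variable (A : Matrix (Fin n) (Fin n) ℝ) (B : Matrix (Fin n) (Fin m) ℝ)
    (C : Matrix (Fin m) (Fin n) ℝ) (D : Matrix (Fin m) (Fin m) ℝ)

lemma cx_zero {k : ℕ} : cx (0 : Fin k → ℝ) = 0 := by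
  ext a
  show ((0:ℝ) : ℂ) = (0 : Evec k) a
  simp

lemma act_add {a b : ℕ} (M : Matrix (Fin a) (Fin b) ℝ) (v w : Evec b) :
    act M (v + w) = act M v + act M w :=
  LinearMap.map_add (Matrix.toEuclideanLin (M.map Complex.ofReal)) v w

lemma act_smul {a b : ℕ} (M : Matrix (Fin a) (Fin b) ℝ) (c : ℂ) (v : Evec b) :
    act M (c • v) = c • act M v :=
  LinearMap.map_smul (Matrix.toEuclideanLin (M.map Complex.ofReal)) c v

lemma output_add (u w : ℕ → Evec m) (k : ℕ) :
    output A B C D (u + w) k = output A B C D u k + output A B C D w k := by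
  simp only [output, Pi.add_apply]
  have : ∀ i ∈ Finset.range k, act (C * A ^ (k-1-i) * B) (u i + w i)
      = act (C * A ^ (k-1-i) * B) (u i) + act (C * A ^ (k-1-i) * B) (w i) :=
    fun i _ => act_add _ _ _
  rw [act_add, Finset.sum_congr rfl this, Finset.sum_add_distrib]
  abel

lemma output_smul (c : ℂ) (u : ℕ → Evec m) (k : ℕ) :
    output A B C D (c • u) k = c • output A B C D u k := by
  simp only [output, Pi.smul_apply]
  rw [act_smul, smul_add, Finset.smul_sum]
  congr 1
  exact Finset.sum_congr rfl fun i _ => act_smul _ _ _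

lemma output_split (u : ℕ → Evec m) (k : ℕ) :
    output A B C D u k
      = cx (yR A B C D (fun j a => (u j a).re) k)
        + Complex.I • cx (yR A B C D (fun j a => (u j a).im) k) := by
  have hu : u = (fun j => cx (fun a => (u j a).re))
      + Complex.I • (fun j => cx (fun a => (u j a).im)) := by
    funext j
    ext a
    show u j a = cx (fun a => (u j a).re) a + (Complex.I • cx (fun a => (u j a).im)) a
    rw [cx_apply]
    show u j a = _ + Complex.I * (cx (fun a => (u j a).im) a)
    rw [cx_apply, mul_comm]
    exact (Complex.re_add_im (u j a)).symm
  conv_lhs => rw [hu]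
  rw [output_add, output_smul, output_cx, output_cx]

lemma norm_cx_pair_sq (a b : Fin m → ℝ) :
    ‖cx a + Complex.I • cx b‖^2 = sqn a + sqn b := by
  rw [norm_sq_eval]
  congr 1
  · congr 1; funext j
    show ((cx a j + (Complex.I • cx b) j).re) = a j
    show ((cx a j + Complex.I * cx b j).re) = a j
    simp [cx_apply, Complex.add_re, Complex.mul_re]
  · congr 1; funext j
    show ((cx a j + (Complex.I • cx b) j).im) = b j
    show ((cx a j + Complex.I * cx b j).im) = b j
    simp [cx_apply, Complex.add_im, Complex.mul_im]

lemma norm_output_sq (u : ℕ → Evec m) (k : ℕ) :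
    ‖output A B C D u k‖^2
      = sqn (yR A B C D (fun j a => (u j a).re) k)
        + sqn (yR A B C D (fun j a => (u j a).im) k) := by
  rw [output_split, norm_cx_pair_sq]

lemma ttau_supp (T : ℕ) (u : ℕ → Evec m) : ∀ k, T < k → TtauMap A B C D T u k = 0 :=
  fun k hk => if_neg (by omega)

/-- extraction of the real inequality from the gain bound -/
lemma gainA (T : ℕ) (ζ : ℝ) (hζ : 0 ≤ ζ)
    (hg : ENNReal.ofReal ζ ≤ minGain (ltwoTau m T) (TtauMap A B C D T))
    (u : ℕ → Fin m → ℝ) (hu : ∀ k, T < k → u k = 0) :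
    ζ^2 * ∑ k ∈ Finset.range (T+1), sqn (u k)
      ≤ ∑ k ∈ Finset.range (T+1), sqn (yR A B C D u k) := by
  by_cases hz : ∀ k, u k = 0
  · have : ∀ k ∈ Finset.range (T+1), sqn (u k) = 0 := fun k _ => by rw [hz k]; simp [sqn]
    rw [Finset.sum_congr rfl this]
    simp only [Finset.sum_const_zero, mul_zero]
    exact Finset.sum_nonneg fun k _ => sqn_nonneg _
  · push_neg at hz
    set uc : ℕ → Evec m := fun j => cx (u j) with huc
    have hucnz : uc ≠ 0 := by
      intro hcon
      obtain ⟨k, hk⟩ := hz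
      apply hk
      funext a
      have h5 : uc k a = 0 := by rw [hcon]; rfl
      have h6 : (u k a : ℂ) = 0 := h5
      show u k a = 0
      exact_mod_cast h6
    have hmem : uc ∈ ltwoTau m T := by
      intro k hk
      rw [huc]
      show cx (u k) = 0
      rw [hu k hk, cx_zero]
    have hle : minGain (ltwoTau m T) (TtauMap A B C D T)
        ≤ enorm2 (TtauMap A B C D T uc) / enorm2 uc := by
      apply biInf_le _ (Set.mem_sep hmem hucnz)
    have hEu : enorm2 uc
        = (ENNReal.ofReal (∑ k ∈ Finset.range (T+1), sqn (u k))) ^ (1/2:ℝ) := by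
      rw [enorm2_eq_ofReal (f := uc) (K := T) (fun k hk => hmem k hk)]
      congr 2
      exact Finset.sum_congr rfl fun k _ => norm_cx_sq (u k)
    have hEy : enorm2 (TtauMap A B C D T uc)
        = (ENNReal.ofReal (∑ k ∈ Finset.range (T+1), sqn (yR A B C D u k))) ^ (1/2:ℝ) := by
      rw [enorm2_eq_ofReal (f := TtauMap A B C D T uc) (K := T) (ttau_supp A B C D T uc)]
      congr 2
      refine Finset.sum_congr rfl fun k hk => ?_
      have hkT : k ≤ T := by have := Finset.mem_range.mp hk; omega
      rw [TtauMap, if_pos hkT, output_cx, norm_cx_sq]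
    have hU0 : ENNReal.ofReal (∑ k ∈ Finset.range (T+1), sqn (u k)) ≠ 0 := by
      intro hcon
      apply enorm2_ne_zero hucnz
      rw [hEu, hcon]
      simp
    have htot := le_trans hg hle
    rw [hEu, hEy] at htot
    have := (ratio_iff hU0 ENNReal.ofReal_ne_top ENNReal.ofReal_ne_top hζ).mp htot
    rwa [ENNReal.toReal_ofReal (Finset.sum_nonneg fun k _ => sqn_nonneg _),
      ENNReal.toReal_ofReal (Finset.sum_nonneg fun k _ => sqn_nonneg _)] at this

/-- converse: from the real inequality (for all real inputs) to the gain bound -/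
lemma gainB (T : ℕ) (ζ : ℝ) (hζ : 0 ≤ ζ)
    (h : ∀ v : ℕ → Fin m → ℝ, ζ^2 * ∑ k ∈ Finset.range (T+1), sqn (v k)
      ≤ ∑ k ∈ Finset.range (T+1), sqn (yR A B C D v k)) :
    ENNReal.ofReal ζ ≤ minGain (ltwoTau m T) (TtauMap A B C D T) := by
  rw [minGain]
  refine le_iInf fun u => le_iInf fun hu => ?_
  obtain ⟨hmem, hne⟩ := hu
  have hEu : enorm2 u
      = (ENNReal.ofReal (∑ k ∈ Finset.range (T+1), ‖u k‖^2)) ^ (1/2:ℝ) :=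
    enorm2_eq_ofReal (fun k hk => hmem k hk)
  have hEy : enorm2 (TtauMap A B C D T u)
      = (ENNReal.ofReal (∑ k ∈ Finset.range (T+1), ‖TtauMap A B C D T u k‖^2)) ^ (1/2:ℝ) :=
    enorm2_eq_ofReal (ttau_supp A B C D T u)
  have hU0 : ENNReal.ofReal (∑ k ∈ Finset.range (T+1), ‖u k‖^2) ≠ 0 := by
    intro hcon
    apply enorm2_ne_zero hne
    rw [hEu, hcon]
    simp
  rw [hEu, hEy]
  rw [ratio_iff hU0 ENNReal.ofReal_ne_top ENNReal.ofReal_ne_top hζ,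
    ENNReal.toReal_ofReal (Finset.sum_nonneg fun k _ => by positivity),
    ENNReal.toReal_ofReal (Finset.sum_nonneg fun k _ => by positivity)]
  set uRe : ℕ → Fin m → ℝ := fun j a => (u j a).re
  set uIm : ℕ → Fin m → ℝ := fun j a => (u j a).im
  have h1 : ∀ k ∈ Finset.range (T+1), ‖u k‖^2 = sqn (uRe k) + sqn (uIm k) :=
    fun k _ => norm_sq_eval (u k)
  have h2 : ∀ k ∈ Finset.range (T+1),
      ‖TtauMap A B C D T u k‖^2 = sqn (yR A B C D uRe k) + sqn (yR A B C D uIm k) := by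
    intro k hk
    have hkT : k ≤ T := by have := Finset.mem_range.mp hk; omega
    rw [TtauMap, if_pos hkT, norm_output_sq]
  rw [Finset.sum_congr rfl h1, Finset.sum_congr rfl h2,
    Finset.sum_add_distrib, Finset.sum_add_distrib, mul_add]
  exact add_le_add (h uRe) (h uIm)

end Stmt3Aux
namespace Stmt3Aux

variable {n m : ℕ}
variable (A : Matrix (Fin n) (Fin n) ℝ) (B : Matrix (Fin n) (Fin m) ℝ)
    (C : Matrix (Fin m) (Fin n) ℝ) (D : Matrix (Fin m) (Fin m) ℝ)

lemma dot_tmul {ia ib ic : Type*} [Fintype ia] [Fintype ib] [Fintype ic]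
    (M : Matrix ia ib ℝ) (N : Matrix ia ic ℝ)
    (x : ib → ℝ) (u : ic → ℝ) :
    x ⬝ᵥ (Mᵀ * N) *ᵥ u = (M *ᵥ x) ⬝ᵥ (N *ᵥ u) := by
  rw [← Matrix.mulVec_mulVec, Matrix.dotProduct_mulVec (v := x), Matrix.vecMul_transpose]

lemma lmi_expand (P : Matrix (Fin n) (Fin n) ℝ) (ζ : ℝ) (x : Fin n → ℝ) (u : Fin m → ℝ) :
    Sum.elim x u ⬝ᵥ (lmiMin A B C D P ζ) *ᵥ Sum.elim x u
      = (A *ᵥ x + B *ᵥ u) ⬝ᵥ P *ᵥ (A *ᵥ x + B *ᵥ u) - x ⬝ᵥ P *ᵥ x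
        - sqn (C *ᵥ x + D *ᵥ u) + ζ^2 * sqn u := by
  rw [lmiMin, Matrix.fromBlocks_mulVec, sumElim_dotProduct_sumElim]
  rw [sqn_eq_dot, sqn_eq_dot]
  simp only [Matrix.add_mulVec, Matrix.sub_mulVec, dotProduct_add, dotProduct_sub,
    Matrix.smul_mulVec, Matrix.one_mulVec, dotProduct_smul,
    add_dotProduct, sub_dotProduct, Sum.elim_comp_inl, Sum.elim_comp_inr]
  have e1 : x ⬝ᵥ (Aᵀ * P * A) *ᵥ x = (A *ᵥ x) ⬝ᵥ P *ᵥ (A *ᵥ x) := by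
    rw [Matrix.mul_assoc, dot_tmul A (P * A) x x, ← Matrix.mulVec_mulVec]
  have e2 : x ⬝ᵥ (Aᵀ * P * B) *ᵥ u = (A *ᵥ x) ⬝ᵥ P *ᵥ (B *ᵥ u) := by
    rw [Matrix.mul_assoc, dot_tmul A (P * B) x u, ← Matrix.mulVec_mulVec]
  have e3 : u ⬝ᵥ (Bᵀ * P * A) *ᵥ x = (B *ᵥ u) ⬝ᵥ P *ᵥ (A *ᵥ x) := by
    rw [Matrix.mul_assoc, dot_tmul B (P * A) u x, ← Matrix.mulVec_mulVec]
  have e4 : u ⬝ᵥ (Bᵀ * P * B) *ᵥ u = (B *ᵥ u) ⬝ᵥ P *ᵥ (B *ᵥ u) := by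
    rw [Matrix.mul_assoc, dot_tmul B (P * B) u u, ← Matrix.mulVec_mulVec]
  have e5 : x ⬝ᵥ (Cᵀ * C) *ᵥ x = (C *ᵥ x) ⬝ᵥ (C *ᵥ x) := dot_tmul C C x x
  have e6 : x ⬝ᵥ (Cᵀ * D) *ᵥ u = (C *ᵥ x) ⬝ᵥ (D *ᵥ u) := dot_tmul C D x u
  have e7 : u ⬝ᵥ (Dᵀ * C) *ᵥ x = (D *ᵥ u) ⬝ᵥ (C *ᵥ x) := dot_tmul D C u x
  have e8 : u ⬝ᵥ (Dᵀ * D) *ᵥ u = (D *ᵥ u) ⬝ᵥ (D *ᵥ u) := dot_tmul D D u u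
  rw [e1, e2, e3, e4, e5, e6, e7, e8]
  have c1 : (C *ᵥ x) ⬝ᵥ (D *ᵥ u) = (D *ᵥ u) ⬝ᵥ (C *ᵥ x) := dotProduct_comm _ _
  rw [smul_eq_mul]
  simp only [Matrix.mulVec_add, dotProduct_add]
  rw [c1]
  ring

/-- Single-step dissipation inequality from the LMI. -/
lemma lmi_step (P : Matrix (Fin n) (Fin n) ℝ) (ζ : ℝ)
    (hneg : IsNegSemidef (lmiMin A B C D P ζ)) (x : Fin n → ℝ) (u : Fin m → ℝ) :
    (A *ᵥ x + B *ᵥ u) ⬝ᵥ P *ᵥ (A *ᵥ x + B *ᵥ u) - x ⬝ᵥ P *ᵥ x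
      ≤ sqn (C *ᵥ x + D *ᵥ u) - ζ^2 * sqn u := by
  have := hneg.2 (Sum.elim x u)
  rw [lmi_expand] at this
  linarith

/-- Telescoping: the finite-horizon inequality from the LMI. -/
lemma lmi_telescope (P : Matrix (Fin n) (Fin n) ℝ) (ζ : ℝ)
    (hP : IsPosSemidefR P) (hneg : IsNegSemidef (lmiMin A B C D P ζ))
    (v : ℕ → Fin m → ℝ) (K : ℕ) :
    ζ^2 * ∑ k ∈ Finset.range K, sqn (v k) ≤ ∑ k ∈ Finset.range K, sqn (yR A B C D v k) := by
  have main : ∀ K : ℕ, xsR A B v K ⬝ᵥ P *ᵥ xsR A B v K + ζ^2 * ∑ k ∈ Finset.range K, sqn (v k)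
      ≤ ∑ k ∈ Finset.range K, sqn (yR A B C D v k) := by
    intro K
    induction K with
    | zero =>
      simp [xsR, Matrix.mulVec_zero, dotProduct_zero]
    | succ K ih =>
      rw [Finset.sum_range_succ, Finset.sum_range_succ]
      have hstep := lmi_step A B C D P ζ hneg (xsR A B v K) (v K)
      have hx : xsR A B v (K+1) = A *ᵥ xsR A B v K + B *ᵥ v K := rfl
      have hy : yR A B C D v K = C *ᵥ xsR A B v K + D *ᵥ v K := rfl
      rw [hx, hy]
      nlinarith [hstep, ih]
  have := main K
  nlinarith [hP.2 (xsR A B v K), this]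

/-- Easy direction: any LMI-certified ζ bounds every finite-horizon minimum gain. -/
lemma easy_dir (ζ : ℝ) (hζ : 0 ≤ ζ) (P : Matrix (Fin n) (Fin n) ℝ)
    (hP : IsPosSemidefR P) (hneg : IsNegSemidef (lmiMin A B C D P ζ)) (T : ℕ) :
    ENNReal.ofReal ζ ≤ minGain (ltwoTau m T) (TtauMap A B C D T) :=
  gainB A B C D T ζ hζ fun v => lmi_telescope A B C D P ζ hP hneg v (T+1)

/-! ### Shift and antitonicity -/

/-- delay a sequence by one step -/
def shf {α : Type*} [Zero α] (u : ℕ → α) : ℕ → α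
  | 0 => 0
  | k+1 => u k

lemma act_zero {a b : ℕ} (M : Matrix (Fin a) (Fin b) ℝ) : act M (0 : Evec b) = 0 :=
  LinearMap.map_zero (Matrix.toEuclideanLin (M.map Complex.ofReal))

lemma output_shf_zero (u : ℕ → Evec m) : output A B C D (shf u) 0 = 0 := by
  rw [output]
  simp [shf, act_zero]

lemma output_shf (u : ℕ → Evec m) (k : ℕ) :
    output A B C D (shf u) (k+1) = output A B C D u k := by
  rw [output, output]
  congr 1
  rw [Finset.sum_range_succ']
  have h0 : act (C * A ^ (k + 1 - 1 - 0) * B) (shf u 0) = 0 := by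
    show act _ (0 : Evec m) = 0
    exact act_zero _
  rw [h0, add_zero]
  refine Finset.sum_congr rfl fun i hi => ?_
  have : k + 1 - 1 - (i+1) = k - 1 - i := by omega
  rw [this]
  rfl

lemma ttau_shf (T : ℕ) (u : ℕ → Evec m) :
    TtauMap A B C D (T+1) (shf u) = shf (TtauMap A B C D T u) := by
  funext k
  cases k with
  | zero =>
    show (if 0 ≤ T+1 then output A B C D (shf u) 0 else 0) = 0
    rw [if_pos (by omega), output_shf_zero]
  | succ k =>
    show (if k+1 ≤ T+1 then output A B C D (shf u) (k+1) else 0)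
      = (if k ≤ T then output A B C D u k else 0)
    by_cases hk : k ≤ T
    · rw [if_pos (by omega), if_pos hk, output_shf]
    · rw [if_neg (by omega), if_neg hk]

lemma enorm2_shf (f : ℕ → Evec m) : enorm2 (shf f) = enorm2 f := by
  rw [enorm2, enorm2]
  congr 1
  rw [tsum_eq_zero_add' ENNReal.summable]
  show (‖(0 : Evec m)‖₊ : ℝ≥0∞)^2 + ∑' (k:ℕ), (‖f k‖₊ : ℝ≥0∞)^2 = _
  simp

lemma shf_ne_zero (u : ℕ → Evec m) (hu : u ≠ 0) : shf u ≠ 0 := by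
  intro hcon
  apply hu
  funext k
  have : shf u (k+1) = 0 := by rw [hcon]; rfl
  exact this

lemma shf_mem (T : ℕ) (u : ℕ → Evec m) (hu : u ∈ ltwoTau m T) : shf u ∈ ltwoTau m (T+1) := by
  intro k hk
  cases k with
  | zero => omega
  | succ k => exact hu k (by omega)

lemma gain_antitone :
    Antitone (fun τ : ℕ => minGain (ltwoTau m (τ+1)) (TtauMap A B C D (τ+1))) := by
  apply antitone_nat_of_succ_le
  intro τ
  rw [minGain]
  refine le_iInf fun u => le_iInf fun hu => ?_
  obtain ⟨hmem, hne⟩ := hu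
  calc minGain (ltwoTau m (τ+1+1)) (TtauMap A B C D (τ+1+1))
      ≤ enorm2 (TtauMap A B C D (τ+1+1) (shf u)) / enorm2 (shf u) :=
        biInf_le _ (Set.mem_sep (shf_mem (τ+1) u hmem) (shf_ne_zero u hne))
    _ = enorm2 (TtauMap A B C D (τ+1) u) / enorm2 u := by
        rw [ttau_shf, enorm2_shf, enorm2_shf]

end Stmt3Aux
namespace Stmt3Aux

variable {n m : ℕ}
variable (A : Matrix (Fin n) (Fin n) ℝ) (B : Matrix (Fin n) (Fin m) ℝ)
    (C : Matrix (Fin m) (Fin n) ℝ) (D : Matrix (Fin m) (Fin m) ℝ)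

/-- support strictly below `T` -/
def supp (T : ℕ) (u : ℕ → Fin m → ℝ) : Prop := ∀ k, T ≤ k → u k = 0

/-- finite-horizon cost -/
def cost (ζ : ℝ) (T : ℕ) (u : ℕ → Fin m → ℝ) : ℝ :=
  ∑ k ∈ Finset.range T, (sqn (yR A B C D u k) - ζ^2 * sqn (u k))

lemma xsR_add (u v : ℕ → Fin m → ℝ) (k : ℕ) :
    xsR A B (u + v) k = xsR A B u k + xsR A B v k := by
  induction k with
  | zero => show (0 : Fin n → ℝ) = 0 + 0; simp
  | succ k ih =>
    show A *ᵥ (xsR A B (u+v) k) + B *ᵥ (u k + v k) = _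
    rw [ih, Matrix.mulVec_add, Matrix.mulVec_add]
    show _ = (A *ᵥ xsR A B u k + B *ᵥ u k) + (A *ᵥ xsR A B v k + B *ᵥ v k)
    abel

lemma xsR_smul (c : ℝ) (u : ℕ → Fin m → ℝ) (k : ℕ) :
    xsR A B (c • u) k = c • xsR A B u k := by
  induction k with
  | zero => show (0 : Fin n → ℝ) = c • 0; simp
  | succ k ih =>
    show A *ᵥ (xsR A B (c • u) k) + B *ᵥ (c • u k) = c • (A *ᵥ xsR A B u k + B *ᵥ u k)
    rw [ih, smul_add]
    congr 1
    · rw [Matrix.mulVec_smul]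
    · rw [Matrix.mulVec_smul]

lemma yR_add (u v : ℕ → Fin m → ℝ) (k : ℕ) :
    yR A B C D (u + v) k = yR A B C D u k + yR A B C D v k := by
  rw [yR, yR, yR, xsR_add, Matrix.mulVec_add]
  show _ + D *ᵥ (u k + v k) = _
  rw [Matrix.mulVec_add]
  abel

lemma yR_smul (c : ℝ) (u : ℕ → Fin m → ℝ) (k : ℕ) :
    yR A B C D (c • u) k = c • yR A B C D u k := by
  rw [yR, yR, xsR_smul, smul_add]
  show _ + D *ᵥ (c • u k) = _
  rw [Matrix.mulVec_smul, Matrix.mulVec_smul]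

/-- fill a finite window into an infinite sequence -/
def seqOf (T : ℕ) (w : Fin T × Fin m → ℝ) : ℕ → Fin m → ℝ :=
  fun k a => if h : k < T then w (⟨k, h⟩, a) else 0

lemma seqOf_supp (T : ℕ) (w : Fin T × Fin m → ℝ) : supp T (seqOf T w) := by
  intro k hk
  funext a
  show (if h : k < T then w (⟨k,h⟩,a) else 0) = 0
  rw [dif_neg (by omega)]

lemma seqOf_vec (T : ℕ) (u : ℕ → Fin m → ℝ) (hu : supp T u) :
    seqOf T (fun p => u p.1 p.2) = u := by
  funext k a
  rw [seqOf]
  split_ifs with h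
  · rfl
  · rw [hu k (by omega)]
    rfl

lemma seqOf_add (T : ℕ) (w w' : Fin T × Fin m → ℝ) :
    seqOf T (w + w') = seqOf T w + seqOf T w' := by
  funext k a
  show (if h : k < T then (w + w') (⟨k,h⟩, a) else 0) = _
  show _ = (if h : k < T then w (⟨k,h⟩, a) else 0) + (if h : k < T then w' (⟨k,h⟩, a) else 0)
  split_ifs with h
  · rfl
  · simp

lemma seqOf_smul (T : ℕ) (c : ℝ) (w : Fin T × Fin m → ℝ) :
    seqOf T (c • w) = c • seqOf T w := by
  funext k a
  show (if h : k < T then (c • w) (⟨k,h⟩, a) else 0)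
    = c * (if h : k < T then w (⟨k,h⟩, a) else 0)
  split_ifs with h
  · rfl
  · simp

/-- the standard basis vector used by `pi_eq_sum_univ` -/
def ebase {ι : Type*} [DecidableEq ι] (q : ι) : ι → ℝ := fun i => if q = i then 1 else 0

lemma matrix_of_lin {ι κ : Type*} [Fintype ι] [DecidableEq ι] [Fintype κ]
    (f : (ι → ℝ) →ₗ[ℝ] (κ → ℝ)) (w : ι → ℝ) :
    (Matrix.of fun (j : κ) (q : ι) => f (ebase q) j) *ᵥ w = f w := by
  conv_rhs => rw [pi_eq_sum_univ w, map_sum]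
  funext j
  rw [Finset.sum_apply]
  simp only [_root_.map_smul, Pi.smul_apply, smul_eq_mul]
  simp [Matrix.mulVec, dotProduct, ebase, mul_comm]
  rfl

/-- stacked output linear map on a window -/
def FY (ζ : ℝ) (T : ℕ) : (Fin T × Fin m → ℝ) →ₗ[ℝ] (Fin T × Fin m → ℝ) where
  toFun w := fun p => yR A B C D (seqOf T w) p.1 p.2
  map_add' w w' := by
    funext p
    show yR A B C D (seqOf T (w + w')) p.1 p.2 = _
    rw [seqOf_add, yR_add]
    rfl
  map_smul' c w := by
    funext p
    show yR A B C D (seqOf T (c • w)) p.1 p.2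
      = c * yR A B C D (seqOf T w) p.1 p.2
    rw [seqOf_smul, yR_smul]
    rfl

/-- reached state linear map on a window -/
def FL (T : ℕ) : (Fin T × Fin m → ℝ) →ₗ[ℝ] (Fin n → ℝ) where
  toFun w := xsR A B (seqOf T w) T
  map_add' w w' := by
    show xsR A B (seqOf T (w + w')) T = xsR A B (seqOf T w) T + xsR A B (seqOf T w') T
    rw [seqOf_add, xsR_add]
  map_smul' c w := by
    show xsR A B (seqOf T (c • w)) T = c • xsR A B (seqOf T w) T
    rw [seqOf_smul, xsR_smul]

def Ymat (ζ : ℝ) (T : ℕ) : Matrix (Fin T × Fin m) (Fin T × Fin m) ℝ :=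
  Matrix.of fun p q => FY A B C D ζ T (ebase q) p

def Lmat (T : ℕ) : Matrix (Fin n) (Fin T × Fin m) ℝ :=
  Matrix.of fun j q => FL A B T (ebase q) j

lemma Ymat_mulVec (ζ : ℝ) (T : ℕ) (w : Fin T × Fin m → ℝ) :
    Ymat A B C D ζ T *ᵥ w = fun p => yR A B C D (seqOf T w) p.1 p.2 :=
  matrix_of_lin (FY A B C D ζ T) w

lemma Lmat_mulVec (T : ℕ) (w : Fin T × Fin m → ℝ) :
    Lmat A B T *ᵥ w = xsR A B (seqOf T w) T :=
  matrix_of_lin (FL A B T) w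

lemma sum_range_prod {T : ℕ} (g : ℕ → Fin m → ℝ) :
    ∑ k ∈ Finset.range T, sqn (g k) = ∑ p : Fin T × Fin m, (g (p.1 : ℕ) p.2)^2 := by
  rw [Fintype.sum_prod_type, ← Fin.sum_univ_eq_sum_range (fun k => sqn (g k))]
  exact Finset.sum_congr rfl fun i _ => by rw [sqn]

lemma cost_eq_mat (ζ : ℝ) (T : ℕ) (w : Fin T × Fin m → ℝ) :
    cost A B C D ζ T (seqOf T w)
      = (Ymat A B C D ζ T *ᵥ w) ⬝ᵥ (Ymat A B C D ζ T *ᵥ w) - ζ^2 * (w ⬝ᵥ w) := by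
  rw [cost, Finset.sum_sub_distrib, ← Finset.mul_sum]
  congr 1
  · rw [sum_range_prod, Ymat_mulVec]
    rw [dotProduct]
    exact Finset.sum_congr rfl fun p _ => pow_two _
  · congr 1
    rw [sum_range_prod, dotProduct]
    refine Finset.sum_congr rfl fun p _ => ?_
    have hw : seqOf T w (↑p.1) p.2 = w p := by simp [seqOf]
    rw [hw, pow_two]

/-- the quadratic form matrix -/
def Qmat (ζ : ℝ) (T : ℕ) : Matrix (Fin T × Fin m) (Fin T × Fin m) ℝ :=
  (Ymat A B C D ζ T)ᵀ * Ymat A B C D ζ T - ζ^2 • (1 : Matrix (Fin T × Fin m) (Fin T × Fin m) ℝ)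

lemma cost_eq_q (ζ : ℝ) (T : ℕ) (w : Fin T × Fin m → ℝ) :
    cost A B C D ζ T (seqOf T w) = w ⬝ᵥ Qmat A B C D ζ T *ᵥ w := by
  rw [cost_eq_mat, Qmat, Matrix.sub_mulVec, dotProduct_sub, dot_tmul,
    Matrix.smul_mulVec, Matrix.one_mulVec, dotProduct_smul, smul_eq_mul]

lemma Qmat_posSemidef (ζ : ℝ) (T : ℕ)
    (hq : ∀ u : ℕ → Fin m → ℝ, supp T u → 0 ≤ cost A B C D ζ T u) :
    (Qmat A B C D ζ T).PosSemidef := by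
  refine Matrix.PosSemidef.of_dotProduct_mulVec_nonneg ?_ ?_
  · show (Qmat A B C D ζ T)ᴴ = _
    rw [Matrix.conjTranspose_eq_transpose_of_trivial, Qmat, Matrix.transpose_sub,
      Matrix.transpose_mul, Matrix.transpose_transpose, Matrix.transpose_smul,
      Matrix.transpose_one]
  · intro x
    have h1 := hq (seqOf T x) (seqOf_supp T x)
    rw [cost_eq_q] at h1
    simpa using h1

end Stmt3Aux
namespace Stmt3Aux

variable {n m : ℕ}
variable (A : Matrix (Fin n) (Fin n) ℝ) (B : Matrix (Fin n) (Fin m) ℝ)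
    (C : Matrix (Fin m) (Fin n) ℝ) (D : Matrix (Fin m) (Fin m) ℝ)

lemma seqOf_ebase_ne (T : ℕ) (q : Fin T × Fin m) (i : ℕ) (hi : i ≠ (q.1:ℕ)) :
    seqOf T (ebase q) i = 0 := by
  funext a
  show (if h : i < T then ebase q (⟨i,h⟩, a) else 0) = 0
  split_ifs with h
  · rw [ebase, if_neg]
    intro hc
    apply hi
    rw [hc]
  · rfl

lemma seqOf_ebase_eq (T : ℕ) (q : Fin T × Fin m) :
    seqOf T (ebase q) (q.1:ℕ) = fun a => if q.2 = a then 1 else 0 := by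
  funext a
  show (if h : (q.1:ℕ) < T then ebase q (⟨(q.1:ℕ),h⟩, a) else 0) = _
  rw [dif_pos q.1.2, ebase]
  congr 1
  simp [Prod.ext_iff, Fin.ext_iff]

lemma Lmat_entry (T : ℕ) (j : Fin n) (q : Fin T × Fin m) :
    Lmat A B T j q = (A ^ (T-1-(q.1:ℕ)) * B) j q.2 := by
  show FL A B T (ebase q) j = _
  show xsR A B (seqOf T (ebase q)) T j = _
  rw [xsR_eq_sum]
  rw [Finset.sum_eq_single_of_mem (q.1:ℕ) (Finset.mem_range.mpr q.1.2)
    (fun i _ hi => by rw [seqOf_ebase_ne T q i hi, Matrix.mulVec_zero])]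
  rw [seqOf_ebase_eq]
  simp [Matrix.mulVec, dotProduct]

lemma Lmat_surj (T : ℕ) (hTn : n ≤ T) (hctrb : Controllable A B) :
    Function.Surjective (Lmat A B T).mulVecLin := by
  have hK : LinearMap.range (Matrix.of fun i (p : Fin n × Fin m) =>
      (A ^ (p.1 : ℕ) * B) i p.2).mulVecLin = ⊤ := by
    apply Submodule.eq_top_of_finrank_eq
    rw [← Matrix.rank]
    rw [hctrb]
    simp [Module.finrank_pi]
  have hsub : LinearMap.range (Matrix.of fun i (p : Fin n × Fin m) =>
      (A ^ (p.1 : ℕ) * B) i p.2).mulVecLin ≤ LinearMap.range (Lmat A B T).mulVecLin := by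
    rintro x ⟨v, rfl⟩
    refine ⟨fun q => ∑ p : Fin n × Fin m,
      if (q.1:ℕ) = T - 1 - (p.1:ℕ) ∧ q.2 = p.2 then v p else 0, ?_⟩
    rw [Matrix.mulVecLin_apply, Matrix.mulVecLin_apply]
    funext j
    rw [Matrix.mulVec, dotProduct]
    have hswap : ∀ q : Fin T × Fin m, Lmat A B T j q * (∑ p : Fin n × Fin m,
        if (q.1:ℕ) = T - 1 - (p.1:ℕ) ∧ q.2 = p.2 then v p else 0)
        = ∑ p : Fin n × Fin m,
          (if (q.1:ℕ) = T - 1 - (p.1:ℕ) ∧ q.2 = p.2 then Lmat A B T j q * v p else 0) := by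
      intro q
      rw [Finset.mul_sum]
      exact Finset.sum_congr rfl fun p _ => by rw [mul_ite, mul_zero]
    rw [Finset.sum_congr rfl fun q _ => hswap q, Finset.sum_comm]
    rw [Matrix.mulVec, dotProduct]
    refine Finset.sum_congr rfl fun p _ => ?_
    have hp1 : (p.1:ℕ) < n := p.1.2
    have hqp1 : T - 1 - (p.1:ℕ) < T := by omega
    set qp : Fin T × Fin m := (⟨T - 1 - (p.1:ℕ), hqp1⟩, p.2) with hqp
    rw [Finset.sum_eq_single_of_mem qp (Finset.mem_univ qp)]
    · rw [if_pos (by constructor <;> rfl)]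
      rw [Lmat_entry]
      have : T - 1 - ((qp.1:Fin T):ℕ) = (p.1:ℕ) := by
        show T - 1 - (T - 1 - (p.1:ℕ)) = (p.1:ℕ)
        omega
      rw [this]
      rfl
    · intro q _ hq
      rw [if_neg]
      intro ⟨h1, h2⟩
      apply hq
      rw [hqp]
      refine Prod.ext ?_ h2
      exact Fin.ext h1
  rw [← LinearMap.range_eq_top]
  apply le_antisymm le_top
  rw [← hK]
  exact hsub

/-- Main finite-horizon lemma : the optimal cost-to-reach is an exact quadratic form. -/
theorem exQuad (ζ : ℝ) (T : ℕ) (hT2 : 2 ≤ T) (hTn : n ≤ T)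
    (hctrb : Controllable A B)
    (hq : ∀ u : ℕ → Fin m → ℝ, supp T u → 0 ≤ cost A B C D ζ T u) :
    ∃ P : Matrix (Fin n) (Fin n) ℝ, P.IsSymm ∧
      (∀ u, supp T u → xsR A B u T ⬝ᵥ P *ᵥ xsR A B u T ≤ cost A B C D ζ T u) ∧
      (∀ x : Fin n → ℝ, ∃ u, supp T u ∧ xsR A B u T = x ∧ cost A B C D ζ T u = x ⬝ᵥ P *ᵥ x) := by
  classical
  open scoped MatrixOrder Matrix.Norms.L2Operator in
  obtain ⟨Rm, hR⟩ := CStarAlgebra.nonneg_iff_eq_star_mul_self.mp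
    (Qmat_posSemidef A B C D ζ T hq).nonneg
  rw [Matrix.star_eq_conjTranspose, Matrix.conjTranspose_eq_transpose_of_trivial] at hR
  let ι := Fin T × Fin m
  let EE := EuclideanSpace ℝ ι
  set toE : (ι → ℝ) ≃ₗ[ℝ] EE := (WithLp.linearEquiv 2 ℝ (ι → ℝ)).symm with htoE
  have innerE : ∀ a b : ι → ℝ, (inner ℝ (toE a) (toE b) : ℝ) = a ⬝ᵥ b := by
    intro a b
    rw [PiLp.inner_apply]
    exact Finset.sum_congr rfl fun i _ => by
      show inner ℝ (a i) (b i) = a i * b i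
      rw [Real.inner_apply]
  set RL : (ι → ℝ) →ₗ[ℝ] EE := toE.toLinearMap ∘ₗ Rm.mulVecLin with hRL
  have cost_RL : ∀ w : ι → ℝ, cost A B C D ζ T (seqOf T w) = ‖RL w‖^2 := by
    intro w
    rw [cost_eq_q, ← real_inner_self_eq_norm_sq]
    show _ = (inner ℝ (toE (Rm *ᵥ w)) (toE (Rm *ᵥ w)) : ℝ)
    rw [innerE, hR, ← Matrix.mulVec_mulVec, Matrix.dotProduct_mulVec (v := w),
      Matrix.vecMul_transpose]
  obtain ⟨Esec, hEsec⟩ := (Lmat A B T).mulVecLin.exists_rightInverse_of_surjective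
    (LinearMap.range_eq_top.mpr (Lmat_surj A B T hTn hctrb))
  have hEsec' : ∀ x, Lmat A B T *ᵥ (Esec x) = x := by
    intro x
    have := congrFun (congrArg DFunLike.coe hEsec) x
    exact this
  set KerL := LinearMap.ker (Lmat A B T).mulVecLin
  set S : Submodule ℝ EE := KerL.map RL with hS
  set zmap : (Fin n → ℝ) →ₗ[ℝ] EE := RL ∘ₗ Esec with hz
  set prj : EE →ₗ[ℝ] EE := S.subtype ∘ₗ (S.orthogonalProjectionOnto).toLinearMap with hprj
  set Gmap : (Fin n → ℝ) →ₗ[ℝ] EE := zmap - prj ∘ₗ zmap with hG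
  -- key minimization facts
  have hGval : ∀ x, Gmap x = zmap x - (S.orthogonalProjectionOnto (zmap x) : EE) := fun x => rfl
  have hmin : ∀ (x : Fin n → ℝ) (s : EE), s ∈ S → ‖Gmap x‖^2 ≤ ‖zmap x + s‖^2 := by
    intro x s hs
    have hdec : zmap x + s = Gmap x + ((S.orthogonalProjectionOnto (zmap x) : EE) + s) := by
      rw [hGval]; abel
    have hmem : ((S.orthogonalProjectionOnto (zmap x) : EE) + s) ∈ S :=
      S.add_mem (SetLike.coe_mem _) hs
    have horto : (inner ℝ (Gmap x) ((S.orthogonalProjectionOnto (zmap x) : EE) + s) : ℝ) = 0 := by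
      rw [hGval]
      exact Submodule.inner_left_of_mem_orthogonal hmem
        (Submodule.sub_starProjection_mem_orthogonal _)
    rw [hdec, norm_add_sq_real, horto]
    nlinarith [sq_nonneg ‖(S.orthogonalProjectionOnto (zmap x) : EE) + s‖, sq_nonneg ‖Gmap x‖]
  -- the candidate matrix
  set P : Matrix (Fin n) (Fin n) ℝ :=
    Matrix.of fun i j => (inner ℝ (Gmap (ebase i)) (Gmap (ebase j)) : ℝ) with hP
  have hPqf : ∀ x : Fin n → ℝ, x ⬝ᵥ P *ᵥ x = ‖Gmap x‖^2 := by
    intro x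
    have hx : Gmap x = ∑ i, x i • Gmap (ebase i) := by
      conv_lhs => rw [pi_eq_sum_univ x, map_sum]
      refine Finset.sum_congr rfl fun i _ => ?_
      show Gmap (x i • ebase i) = x i • Gmap (ebase i)
      exact Gmap.map_smul (x i) (ebase i)
    rw [← real_inner_self_eq_norm_sq, hx, sum_inner]
    rw [dotProduct]
    refine Finset.sum_congr rfl fun i _ => ?_
    rw [real_inner_smul_left, inner_sum, Matrix.mulVec, dotProduct,
      Finset.mul_sum, Finset.mul_sum]
    refine Finset.sum_congr rfl fun j _ => ?_
    rw [real_inner_smul_right]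
    exact congrArg (fun t => x i * t) (mul_comm _ _)
  refine ⟨P, ?_, ?_, ?_⟩
  · -- symmetry
    show Pᵀ = P
    ext i j
    show P j i = P i j
    show (inner ℝ (Gmap (ebase j)) (Gmap (ebase i)) : ℝ)
      = (inner ℝ (Gmap (ebase i)) (Gmap (ebase j)) : ℝ)
    exact real_inner_comm _ _
  · -- lower bound
    intro u hu
    set w : ι → ℝ := fun p => u p.1 p.2 with hw
    have hsw : seqOf T w = u := seqOf_vec T u hu
    set x := xsR A B u T with hx
    have hLw : Lmat A B T *ᵥ w = x := by rw [← hsw] at hx; rw [hx, Lmat_mulVec]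
    have hker : w - Esec x ∈ KerL := by
      rw [LinearMap.mem_ker, map_sub]
      show (Lmat A B T).mulVecLin w - (Lmat A B T).mulVecLin (Esec x) = 0
      rw [Matrix.mulVecLin_apply, Matrix.mulVecLin_apply, hLw, hEsec' x, sub_self]
    have hcost : cost A B C D ζ T u = ‖RL w‖^2 := by rw [← hsw, cost_RL]
    have hRw : RL w = zmap x + RL (w - Esec x) := by
      rw [map_sub]
      show _ = RL (Esec x) + (RL w - RL (Esec x))
      abel
    rw [hcost, hRw, hPqf]
    exact hmin x _ ⟨w - Esec x, hker, rfl⟩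
  · -- attainment
    intro x
    have hpmem : (S.orthogonalProjectionOnto (zmap x) : EE) ∈ S := SetLike.coe_mem _
    obtain ⟨v, hv, hvz⟩ := hpmem
    set w : ι → ℝ := Esec x - v with hw
    refine ⟨seqOf T w, seqOf_supp T w, ?_, ?_⟩
    · rw [← Lmat_mulVec]
      show (Lmat A B T).mulVecLin w = x
      rw [hw, map_sub]
      have h1 : (Lmat A B T).mulVecLin (Esec x) = x := by
        rw [Matrix.mulVecLin_apply]; exact hEsec' x
      have h2 : (Lmat A B T).mulVecLin v = 0 := hv
      rw [h1, h2, sub_zero]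
    · rw [cost_RL, hPqf, hGval]
      have hvec : RL w = zmap x - (S.orthogonalProjectionOnto (zmap x) : EuclideanSpace ℝ (Fin T × Fin m)) := by
        rw [hw, map_sub, hvz]
        rfl
      rw [hvec]

end Stmt3Aux
namespace Stmt3Aux

variable {n m : ℕ}
variable (A : Matrix (Fin n) (Fin n) ℝ) (B : Matrix (Fin n) (Fin m) ℝ)
    (C : Matrix (Fin m) (Fin n) ℝ) (D : Matrix (Fin m) (Fin m) ℝ)

lemma sqn_zero {k : ℕ} : sqn (0 : Fin k → ℝ) = 0 := by simp [sqn]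

lemma xsR_shf (u : ℕ → Fin m → ℝ) (k : ℕ) : xsR A B (shf u) (k+1) = xsR A B u k := by
  induction k with
  | zero =>
    show A *ᵥ (0 : Fin n → ℝ) + B *ᵥ (0 : Fin m → ℝ) = 0
    simp
  | succ k ih =>
    show A *ᵥ (xsR A B (shf u) (k+1)) + B *ᵥ (shf u (k+1)) = _
    rw [ih]
    rfl

lemma yR_shf (u : ℕ → Fin m → ℝ) (k : ℕ) : yR A B C D (shf u) (k+1) = yR A B C D u k := by
  rw [yR, yR, xsR_shf]
  rfl

lemma yR_shf0 (u : ℕ → Fin m → ℝ) : yR A B C D (shf u) 0 = 0 := by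
  rw [yR]
  show C *ᵥ (0 : Fin n → ℝ) + D *ᵥ (0 : Fin m → ℝ) = 0
  simp

lemma supp_shf (T : ℕ) (u : ℕ → Fin m → ℝ) (hu : supp T u) : supp (T+1) (shf u) := by
  intro k hk
  cases k with
  | zero => omega
  | succ k => exact hu k (by omega)

lemma cost_shf (ζ : ℝ) (T : ℕ) (u : ℕ → Fin m → ℝ) :
    cost A B C D ζ (T+1) (shf u) = cost A B C D ζ T u := by
  rw [cost, cost, Finset.sum_range_succ']
  have h0 : sqn (yR A B C D (shf u) 0) - ζ^2 * sqn (shf u 0) = 0 := by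
    rw [yR_shf0, sqn_zero]
    show (0:ℝ) - ζ^2 * sqn (0 : Fin m → ℝ) = 0
    rw [sqn_zero]
    ring
  rw [h0, add_zero]
  refine Finset.sum_congr rfl fun k _ => ?_
  rw [yR_shf]
  rfl

/-- append `u0` at time `T` -/
def appnd (T : ℕ) (u : ℕ → Fin m → ℝ) (u0 : Fin m → ℝ) : ℕ → Fin m → ℝ :=
  fun k => if k = T then u0 else u k

lemma supp_appnd (T : ℕ) (u : ℕ → Fin m → ℝ) (u0 : Fin m → ℝ) (hu : supp T u) :
    supp (T+1) (appnd T u u0) := by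
  intro k hk
  rw [appnd, if_neg (by omega)]
  exact hu k (by omega)

lemma xsR_appnd (T : ℕ) (u : ℕ → Fin m → ℝ) (u0 : Fin m → ℝ) :
    ∀ k, k ≤ T → xsR A B (appnd T u u0) k = xsR A B u k := by
  intro k
  induction k with
  | zero => intro _; rfl
  | succ k ih =>
    intro hk
    show A *ᵥ (xsR A B (appnd T u u0) k) + B *ᵥ (appnd T u u0 k) = _
    rw [ih (by omega), appnd, if_neg (by omega)]
    rfl

lemma yR_appnd (T : ℕ) (u : ℕ → Fin m → ℝ) (u0 : Fin m → ℝ) :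
    ∀ k, k < T → yR A B C D (appnd T u u0) k = yR A B C D u k := by
  intro k hk
  rw [yR, yR, xsR_appnd A B T u u0 k (by omega), appnd, if_neg (by omega)]

lemma yR_appnd_T (T : ℕ) (u : ℕ → Fin m → ℝ) (u0 : Fin m → ℝ) :
    yR A B C D (appnd T u u0) T = C *ᵥ xsR A B u T + D *ᵥ u0 := by
  rw [yR, xsR_appnd A B T u u0 T le_rfl, appnd, if_pos rfl]

lemma xsR_appnd_succ (T : ℕ) (u : ℕ → Fin m → ℝ) (u0 : Fin m → ℝ) :
    xsR A B (appnd T u u0) (T+1) = A *ᵥ xsR A B u T + B *ᵥ u0 := by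
  show A *ᵥ (xsR A B (appnd T u u0) T) + B *ᵥ (appnd T u u0 T) = _
  rw [xsR_appnd A B T u u0 T le_rfl, appnd, if_pos rfl]

lemma cost_appnd (ζ : ℝ) (T : ℕ) (u : ℕ → Fin m → ℝ) (u0 : Fin m → ℝ) :
    cost A B C D ζ (T+1) (appnd T u u0)
      = cost A B C D ζ T u + (sqn (C *ᵥ xsR A B u T + D *ᵥ u0) - ζ^2 * sqn u0) := by
  rw [cost, cost, Finset.sum_range_succ, yR_appnd_T]
  have hu0 : appnd T u u0 T = u0 := if_pos rfl
  rw [hu0]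
  congr 1
  refine Finset.sum_congr rfl fun k hk => ?_
  have hkT : k < T := Finset.mem_range.mp hk
  rw [yR_appnd A B C D T u u0 k hkT, appnd, if_neg (by omega)]

lemma ebase_dot (M : Matrix (Fin n) (Fin n) ℝ) (a b : Fin n) :
    ebase a ⬝ᵥ M *ᵥ ebase b = M a b := by
  simp [ebase, Matrix.mulVec, dotProduct, mul_ite, ite_mul, mul_zero, zero_mul,
    mul_one, one_mul, Finset.sum_ite_eq, Finset.sum_ite_eq']

lemma qf_expand (M : Matrix (Fin n) (Fin n) ℝ) (y z : Fin n → ℝ) :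
    (y + z) ⬝ᵥ M *ᵥ (y + z)
      = y ⬝ᵥ M *ᵥ y + y ⬝ᵥ M *ᵥ z + z ⬝ᵥ M *ᵥ y + z ⬝ᵥ M *ᵥ z := by
  rw [Matrix.mulVec_add]
  simp only [dotProduct_add, add_dotProduct]
  ring

lemma qf_sum (M : Matrix (Fin n) (Fin n) ℝ) (x : Fin n → ℝ) :
    x ⬝ᵥ M *ᵥ x = ∑ a, ∑ b, x a * M a b * x b := by
  simp only [Matrix.mulVec, dotProduct, Finset.mul_sum]
  exact Finset.sum_congr rfl fun a _ => Finset.sum_congr rfl fun b _ => by ring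

/-- Hard direction: a PSD solution of the LMI exists at the limiting gain. -/
theorem hard_dir (hctrb : Controllable A B) (ζ : ℝ) (hζ : 0 ≤ ζ)
    (hq : ∀ T, 2 ≤ T → ∀ u : ℕ → Fin m → ℝ, supp T u → 0 ≤ cost A B C D ζ T u) :
    ∃ P : Matrix (Fin n) (Fin n) ℝ,
      IsPosSemidefR P ∧ IsNegSemidef (lmiMin A B C D P ζ) := by
  classical
  set T0 := n + 2 with hT0
  choose Pj hsym hlow hatt using fun j : ℕ =>
    exQuad A B C D ζ (T0 + j) (by omega) (by omega) hctrb (hq _ (by omega))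
  set W : ℕ → (Fin n → ℝ) → ℝ := fun j x => x ⬝ᵥ Pj j *ᵥ x with hW
  have hWnonneg : ∀ j x, 0 ≤ W j x := by
    intro j x
    obtain ⟨u, hsu, hxu, hcu⟩ := hatt j x
    rw [hW]
    simp only
    rw [← hcu]
    exact hq _ (by omega) u hsu
  have hWanti : ∀ x, Antitone (fun j => W j x) := by
    intro x
    apply antitone_nat_of_succ_le
    intro j
    obtain ⟨u, hsu, hxu, hcu⟩ := hatt j x
    have hstep := hlow (j+1) (shf u) (supp_shf (T0 + j) u hsu)
    have he : T0 + (j+1) = (T0 + j) + 1 := rfl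
    rw [he, xsR_shf, hxu, cost_shf, hcu] at hstep
    exact hstep
  have hWdiss : ∀ j x u0, W (j+1) (A *ᵥ x + B *ᵥ u0)
      ≤ W j x + (sqn (C *ᵥ x + D *ᵥ u0) - ζ^2 * sqn u0) := by
    intro j x u0
    obtain ⟨u, hsu, hxu, hcu⟩ := hatt j x
    have hstep := hlow (j+1) (appnd (T0+j) u u0) (supp_appnd (T0+j) u u0 hsu)
    have he : T0 + (j+1) = (T0 + j) + 1 := rfl
    rw [he, xsR_appnd_succ, cost_appnd, hxu, hcu] at hstep
    exact hstep
  have hbdd : ∀ x, BddBelow (Set.range fun j => W j x) := by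
    intro x
    exact ⟨0, by rintro _ ⟨j, rfl⟩; exact hWnonneg j x⟩
  set Wi : (Fin n → ℝ) → ℝ := fun x => ⨅ j, W j x with hWi
  have htend : ∀ x, Filter.Tendsto (fun j => W j x) Filter.atTop (𝓝 (Wi x)) :=
    fun x => tendsto_atTop_ciInf (hWanti x) (hbdd x)
  set Pinf : Matrix (Fin n) (Fin n) ℝ :=
    Matrix.of fun a b => (Wi (ebase a + ebase b) - Wi (ebase a) - Wi (ebase b))/2 with hPinf
  have hentry : ∀ a b : Fin n,
      Filter.Tendsto (fun j => Pj j a b) Filter.atTop (𝓝 (Pinf a b)) := by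
    intro a b
    have hPjab : ∀ j, Pj j a b
        = (W j (ebase a + ebase b) - W j (ebase a) - W j (ebase b))/2 := by
      intro j
      have hba : Pj j b a = Pj j a b := congrFun (congrFun (hsym j) a) b
      rw [hW]
      simp only
      rw [qf_expand, ebase_dot, ebase_dot, ebase_dot, ebase_dot, hba]
      ring
    simp only [hPjab]
    have : Pinf a b = (Wi (ebase a + ebase b) - Wi (ebase a) - Wi (ebase b))/2 := rfl
    rw [this]
    exact (((htend _).sub (htend _)).sub (htend _)).div_const 2
  have hqf : ∀ x, Filter.Tendsto (fun j => W j x) Filter.atTop (𝓝 (x ⬝ᵥ Pinf *ᵥ x)) := by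
    intro x
    have hform : ∀ j, W j x = ∑ a, ∑ b, x a * Pj j a b * x b := fun j => qf_sum _ x
    simp only [hform, qf_sum Pinf x]
    refine tendsto_finset_sum _ fun a _ => tendsto_finset_sum _ fun b _ => ?_
    exact ((hentry a b).const_mul (x a)).mul_const (x b)
  have hquniq : ∀ x, x ⬝ᵥ Pinf *ᵥ x = Wi x := fun x =>
    tendsto_nhds_unique (hqf x) (htend x)
  have hPsymm : Pinf.IsSymm := by
    ext a b
    show Pinf b a = Pinf a b
    show (Wi (ebase b + ebase a) - Wi (ebase b) - Wi (ebase a))/2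
      = (Wi (ebase a + ebase b) - Wi (ebase a) - Wi (ebase b))/2
    rw [add_comm (ebase b) (ebase a)]
    ring
  have hPnonneg : ∀ x, 0 ≤ x ⬝ᵥ Pinf *ᵥ x := by
    intro x
    rw [hquniq x]
    exact le_ciInf fun j => hWnonneg j x
  have hdiss : ∀ x u0, (A *ᵥ x + B *ᵥ u0) ⬝ᵥ Pinf *ᵥ (A *ᵥ x + B *ᵥ u0)
      ≤ x ⬝ᵥ Pinf *ᵥ x + (sqn (C *ᵥ x + D *ᵥ u0) - ζ^2 * sqn u0) := by
    intro x u0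
    have h1 : Filter.Tendsto (fun j => W (j+1) (A *ᵥ x + B *ᵥ u0)) Filter.atTop
        (𝓝 ((A *ᵥ x + B *ᵥ u0) ⬝ᵥ Pinf *ᵥ (A *ᵥ x + B *ᵥ u0))) :=
      (hqf _).comp (Filter.tendsto_add_atTop_nat 1)
    have h2 : Filter.Tendsto
        (fun j => W j x + (sqn (C *ᵥ x + D *ᵥ u0) - ζ^2 * sqn u0)) Filter.atTop
        (𝓝 (x ⬝ᵥ Pinf *ᵥ x + (sqn (C *ᵥ x + D *ᵥ u0) - ζ^2 * sqn u0))) :=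
      (hqf x).add_const _
    exact le_of_tendsto_of_tendsto' h1 h2 (fun j => hWdiss j x u0)
  have hPt : Pinfᵀ = Pinf := hPsymm
  refine ⟨Pinf, ⟨hPsymm, hPnonneg⟩, ?_, ?_⟩
  · -- symmetry of the LMI matrix
    show (lmiMin A B C D Pinf ζ)ᵀ = lmiMin A B C D Pinf ζ
    have h11 : (Aᵀ * Pinf * A - Pinf - Cᵀ * C)ᵀ = Aᵀ * Pinf * A - Pinf - Cᵀ * C := by
      simp only [Matrix.transpose_sub, Matrix.transpose_mul, Matrix.transpose_transpose,
        hPt, Matrix.mul_assoc]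
    have h21 : (Bᵀ * Pinf * A - Dᵀ * C)ᵀ = Aᵀ * Pinf * B - Cᵀ * D := by
      simp only [Matrix.transpose_sub, Matrix.transpose_mul, Matrix.transpose_transpose,
        hPt, Matrix.mul_assoc]
    have h12 : (Aᵀ * Pinf * B - Cᵀ * D)ᵀ = Bᵀ * Pinf * A - Dᵀ * C := by
      simp only [Matrix.transpose_sub, Matrix.transpose_mul, Matrix.transpose_transpose,
        hPt, Matrix.mul_assoc]
    have h22 : (Bᵀ * Pinf * B - Dᵀ * D + ζ^2 • (1 : Matrix (Fin m) (Fin m) ℝ))ᵀ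
        = Bᵀ * Pinf * B - Dᵀ * D + ζ^2 • (1 : Matrix (Fin m) (Fin m) ℝ) := by
      simp only [Matrix.transpose_add, Matrix.transpose_sub, Matrix.transpose_mul,
        Matrix.transpose_transpose, hPt, Matrix.transpose_smul, Matrix.transpose_one,
        Matrix.mul_assoc]
    rw [lmiMin, Matrix.fromBlocks_transpose, h11, h21, h12, h22]
  · -- negativity
    intro z
    have hz : z = Sum.elim (z ∘ Sum.inl) (z ∘ Sum.inr) := by
      funext p
      cases p <;> rfl
    rw [hz, lmi_expand]
    have := hdiss (z ∘ Sum.inl) (z ∘ Sum.inr)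
    linarith

end Stmt3Aux
/-- For a minimal realization, `lim_{τ→∞} γ₋(T^τ)` equals the supremum of the
ζ ≥ 0 for which the minimum-gain LMI has a symmetric positive semidefinite solution P. -/
theorem stmt3 {n m : ℕ} (hn : 1 ≤ n) (hm : 1 ≤ m)
    (A : Matrix (Fin n) (Fin n) ℝ) (B : Matrix (Fin n) (Fin m) ℝ)
    (C : Matrix (Fin m) (Fin n) ℝ) (D : Matrix (Fin m) (Fin m) ℝ)
    (hctrb : Controllable A B) (hobs : Observable A C) :
    Tendsto (fun τ : ℕ => minGain (ltwoTau m (τ + 1)) (TtauMap A B C D (τ + 1))) atTop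
      (𝓝 (sSup {g : ℝ≥0∞ | ∃ ζ : ℝ, 0 ≤ ζ ∧ g = ENNReal.ofReal ζ ∧
        ∃ P : Matrix (Fin n) (Fin n) ℝ, IsPosSemidefR P ∧ IsNegSemidef (lmiMin A B C D P ζ)})) := by
  classical
  open Stmt3Aux in
  have hanti := gain_antitone A B C D
  have htend := tendsto_atTop_iInf hanti
  have hs : (⨅ τ : ℕ, minGain (ltwoTau m (τ+1)) (TtauMap A B C D (τ+1)))
      = sSup {g : ℝ≥0∞ | ∃ ζ : ℝ, 0 ≤ ζ ∧ g = ENNReal.ofReal ζ ∧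
        ∃ P : Matrix (Fin n) (Fin n) ℝ, IsPosSemidefR P ∧ IsNegSemidef (lmiMin A B C D P ζ)} := by
    -- the infimum is finite
    have hne_top : (⨅ τ : ℕ, minGain (ltwoTau m (τ+1)) (TtauMap A B C D (τ+1))) ≠ ⊤ := by
      intro hcon
      have h1 : minGain (ltwoTau m 1) (TtauMap A B C D 1) = ⊤ := by
        have := iInf_eq_top.mp hcon 0
        exact this
      set u₀ : ℕ → Evec m := fun k => if k = 0 then Stmt3Aux.cx (fun _ => 1) else 0 with hu₀
      have hu₀mem : u₀ ∈ ltwoTau m 1 := by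
        intro k hk
        rw [hu₀]
        show (if k = 0 then Stmt3Aux.cx (fun _ => 1) else 0) = 0
        rw [if_neg (by omega)]
      have hu₀ne : u₀ ≠ 0 := by
        intro hcon0
        have h5 : u₀ 0 ⟨0, hm⟩ = 0 := by rw [hcon0]; rfl
        have h6 : u₀ 0 ⟨0, hm⟩ = ((1:ℝ):ℂ) := by rw [hu₀]; rfl
        have h7 : ((1:ℝ):ℂ) = 0 := by rw [← h6]; exact h5
        simpa using h7
      have hle : minGain (ltwoTau m 1) (TtauMap A B C D 1)
          ≤ enorm2 (TtauMap A B C D 1 u₀) / enorm2 u₀ :=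
        biInf_le _ (Set.mem_sep hu₀mem hu₀ne)
      rw [h1, top_le_iff] at hle
      have hnum : enorm2 (TtauMap A B C D 1 u₀) ≠ ⊤ :=
        Stmt3Aux.enorm2_ne_top (K := 1) (Stmt3Aux.ttau_supp A B C D 1 u₀)
      have hden : enorm2 u₀ ≠ 0 := Stmt3Aux.enorm2_ne_zero hu₀ne
      rw [ENNReal.div_eq_top] at hle
      rcases hle with ⟨-, h4⟩ | ⟨h4, -⟩
      · exact hden h4
      · exact hnum h4
    apply le_antisymm
    · -- hard direction
      set ζ₀ := (⨅ τ : ℕ, minGain (ltwoTau m (τ+1)) (TtauMap A B C D (τ+1))).toReal with hζ₀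
      have hofR : ENNReal.ofReal ζ₀
          = ⨅ τ : ℕ, minGain (ltwoTau m (τ+1)) (TtauMap A B C D (τ+1)) :=
        ENNReal.ofReal_toReal hne_top
      have hq : ∀ T, 2 ≤ T → ∀ u : ℕ → Fin m → ℝ, Stmt3Aux.supp T u
          → 0 ≤ Stmt3Aux.cost A B C D ζ₀ T u := by
        intro T hT u hu
        have hγT : ENNReal.ofReal ζ₀
            ≤ minGain (ltwoTau m ((T-2)+1)) (TtauMap A B C D ((T-2)+1)) := by
          rw [hofR]
          exact iInf_le _ (T-2)
        rw [show (T-2)+1 = T-1 from by omega] at hγT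
        have h := Stmt3Aux.gainA A B C D (T-1) ζ₀ ENNReal.toReal_nonneg hγT u
          (fun k hk => hu k (by omega))
        rw [show (T-1)+1 = T from by omega] at h
        rw [Stmt3Aux.cost, Finset.sum_sub_distrib, ← Finset.mul_sum]
        linarith
      obtain ⟨P, hP, hneg⟩ := Stmt3Aux.hard_dir A B C D hctrb ζ₀ ENNReal.toReal_nonneg hq
      refine le_trans (le_of_eq hofR.symm) (le_sSup ?_)
      exact ⟨ζ₀, ENNReal.toReal_nonneg, rfl, P, hP, hneg⟩
    · -- easy direction
      apply sSup_le
      rintro g ⟨ζ, hζ0, rfl, P, hP, hneg⟩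
      exact le_iInf fun τ => Stmt3Aux.easy_dir A B C D ζ hζ0 P hP hneg (τ+1)
  rwa [hs] at htend
end
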